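/- The signature of a symmetric nondegenerate bilinear form on a real vector space that is Hermitian with respect to a hypercomplex structure is of the form (4p, 4q): both the dimension of a maximal positive-definite subspace and of a maximal negative-definite subspace are divisible by 4. -/

import Mathlib

open LinearMap (BilinForm)
open Module Submodule

universe u

lemma quatRels {A : Type*} [Ring A] {I J K : A} (hI : I*I = -1) (hJ : J*J = -1)
    (hK : K*K = -1) (hIJK : I*J*K = -1) :
    I*J = K ∧ I*K = -J ∧ J*I = -K ∧ J*K = I ∧ K*I = J ∧ K*J = -I := by
  have hIJ : I*J = K := by
    have e1 : I*J*K*K = -(I*J) := by rw [mul_assoc (I*J), hK, mul_neg_one]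
    have e2 : I*J*K*K = -K := by rw [hIJK, neg_one_mul]
    exact neg_injective (e1.symm.trans e2)
  have hJK : J*K = I := by
    have e1 : I*(I*(J*K)) = -(J*K) := by rw [← mul_assoc I I, hI, neg_one_mul]
    have e2 : I*(J*K) = -1 := by rw [← mul_assoc, hIJK]
    rw [e2, mul_neg_one] at e1
    exact (neg_injective e1).symm
  have hIK : I*K = -J := by
    calc I*K = I*(I*J) := by rw [hIJ]
    _ = (I*I)*J := (mul_assoc _ _ _).symm
    _ = -J := by rw [hI, neg_one_mul]
  have hJI : J*I = -K := by
    calc J*I = J*(J*K) := by rw [hJK]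
    _ = (J*J)*K := (mul_assoc _ _ _).symm
    _ = -K := by rw [hJ, neg_one_mul]
  have hKI : K*I = J := by
    calc K*I = (I*J)*I := by rw [hIJ]
    _ = I*(J*I) := mul_assoc _ _ _
    _ = I*(-K) := by rw [hJI]
    _ = -(I*K) := by rw [mul_neg]
    _ = J := by rw [hIK, neg_neg]
  have hKJ : K*J = -I := by
    calc K*J = (I*J)*J := by rw [hIJ]
    _ = I*(J*J) := mul_assoc _ _ _
    _ = I*(-1) := by rw [hJ]
    _ = -I := by rw [mul_neg_one]
  exact ⟨hIJ, hIK, hJI, hJK, hKI, hKJ⟩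

set_option maxHeartbeats 2000000 in
theorem hyperDecomp : ∀ (n : ℕ) {V : Type u} [AddCommGroup V] [Module ℝ V]
    [FiniteDimensional ℝ V]
    (h : BilinForm ℝ V), (∀ x y, h x y = h y x) → h.Nondegenerate →
    ∀ (I J K : Module.End ℝ V), I*I = -1 → J*J = -1 → K*K = -1 → I*J*K = -1 →
    (∀ x y, h (I x) (I y) = h x y) → (∀ x y, h (J x) (J y) = h x y) →
    (∀ x y, h (K x) (K y) = h x y) → finrank ℝ V = n →
    ∃ P N : Submodule ℝ V, (∀ x ∈ P, x ≠ 0 → 0 < h x x) ∧ (∀ x ∈ N, x ≠ 0 → h x x < 0) ∧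
      finrank ℝ P + finrank ℝ N = finrank ℝ V ∧
      4 ∣ finrank ℝ P ∧ 4 ∣ finrank ℝ N := by
  intro n
  induction n using Nat.strong_induction_on with
  | _ n ih =>
  intro V _ _ _ h hsym hnd I J K hI hJ hK hIJK hhI hhJ hhK hn
  by_cases hex : ∃ x : V, h x x ≠ 0
  case neg =>
    -- the form is identically zero, hence V is trivial
    push_neg at hex
    have hzero : ∀ x y : V, h x y = 0 := by
      intro x y
      have e := hex (x + y)
      simp only [map_add, LinearMap.add_apply] at e
      rw [hex x, hex y, hsym y x] at e
      linarith
    have hall : ∀ x : V, x = 0 := fun x => hnd.1 x (fun y => hzero x y)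
    have hV0 : finrank ℝ V = 0 := by
      have : Subsingleton V := subsingleton_of_forall_eq 0 (fun x => hall x)
      exact finrank_zero_of_subsingleton
    refine ⟨⊥, ⊥, ?_, ?_, ?_, ?_, ?_⟩
    · intro x hx hx0; exact absurd (Submodule.mem_bot ℝ |>.mp hx) hx0
    · intro x hx hx0; exact absurd (Submodule.mem_bot ℝ |>.mp hx) hx0
    · simp [hV0]
    · simp
    · simp
  case pos =>
  obtain ⟨x, hx⟩ := hex
  obtain ⟨hIJ, hIK, hJI, hJK, hKI, hKJ⟩ := quatRels hI hJ hK hIJK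
  -- pointwise versions of endomorphism identities
  have appII : ∀ y : V, I (I y) = -y := by
    intro y; have := LinearMap.ext_iff.mp hI y
    simpa [Module.End.mul_apply] using this
  have appJJ : ∀ y : V, J (J y) = -y := by
    intro y; have := LinearMap.ext_iff.mp hJ y
    simpa [Module.End.mul_apply] using this
  have appKK : ∀ y : V, K (K y) = -y := by
    intro y; have := LinearMap.ext_iff.mp hK y
    simpa [Module.End.mul_apply] using this
  have appIJ : ∀ y : V, I (J y) = K y := by
    intro y; have := LinearMap.ext_iff.mp hIJ y
    simpa [Module.End.mul_apply] using this
  have appIK : ∀ y : V, I (K y) = -(J y) := by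
    intro y; have := LinearMap.ext_iff.mp hIK y
    simpa [Module.End.mul_apply] using this
  have appJI : ∀ y : V, J (I y) = -(K y) := by
    intro y; have := LinearMap.ext_iff.mp hJI y
    simpa [Module.End.mul_apply] using this
  have appJK : ∀ y : V, J (K y) = I y := by
    intro y; have := LinearMap.ext_iff.mp hJK y
    simpa [Module.End.mul_apply] using this
  have appKI : ∀ y : V, K (I y) = J y := by
    intro y; have := LinearMap.ext_iff.mp hKI y
    simpa [Module.End.mul_apply] using this
  have appKJ : ∀ y : V, K (J y) = -(I y) := by
    intro y; have := LinearMap.ext_iff.mp hKJ y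
    simpa [Module.End.mul_apply] using this
  -- the quaternionic line through x
  set f : Fin 4 → V := ![x, I x, J x, K x] with hf
  set U : Submodule ℝ V := Submodule.span ℝ (Set.range f) with hU
  have mx : x ∈ U := subset_span ⟨0, rfl⟩
  have mIx : I x ∈ U := subset_span ⟨1, rfl⟩
  have mJx : J x ∈ U := subset_span ⟨2, rfl⟩
  have mKx : K x ∈ U := subset_span ⟨3, rfl⟩
  -- orthogonality relations among the generators
  have oxI : h x (I x) = 0 := by
    have e := hhI x (I x)
    rw [appII x, map_neg, hsym (I x) x] at e
    linarith
  have oxJ : h x (J x) = 0 := by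
    have e := hhJ x (J x)
    rw [appJJ x, map_neg, hsym (J x) x] at e
    linarith
  have oxK : h x (K x) = 0 := by
    have e := hhK x (K x)
    rw [appKK x, map_neg, hsym (K x) x] at e
    linarith
  have oIJ : h (I x) (J x) = 0 := by
    have e := hhI (I x) (J x)
    rw [appII x, appIJ x] at e
    simp only [map_neg, LinearMap.neg_apply] at e
    rw [oxK] at e
    linarith
  have oIK : h (I x) (K x) = 0 := by
    have e := hhI (I x) (K x)
    rw [appII x, appIK x] at e
    simp only [map_neg, LinearMap.neg_apply] at e
    rw [oxJ] at e
    linarith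
  have oJK : h (J x) (K x) = 0 := by
    have e := hhJ (J x) (K x)
    rw [appJJ x, appJK x] at e
    simp only [map_neg, LinearMap.neg_apply] at e
    rw [oxI] at e
    linarith
  have oIx : h (I x) x = 0 := by rw [hsym]; exact oxI
  have oJx : h (J x) x = 0 := by rw [hsym]; exact oxJ
  have oKx : h (K x) x = 0 := by rw [hsym]; exact oxK
  have oJI : h (J x) (I x) = 0 := by rw [hsym]; exact oIJ
  have oKI : h (K x) (I x) = 0 := by rw [hsym]; exact oIK
  have oKJ : h (K x) (J x) = 0 := by rw [hsym]; exact oJK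
  have dI : h (I x) (I x) = h x x := hhI x x
  have dJ : h (J x) (J x) = h x x := hhJ x x
  have dK : h (K x) (K x) = h x x := hhK x x
  -- linear independence and finrank U = 4
  have hli : LinearIndependent ℝ f := by
    apply LinearMap.BilinForm.linearIndependent_of_iIsOrtho (B := h)
    · intro i j hij
      fin_cases i <;> fin_cases j
      · exact absurd rfl hij
      · exact oxI
      · exact oxJ
      · exact oxK
      · exact oIx
      · exact absurd rfl hij
      · exact oIJ
      · exact oIK
      · exact oJx
      · exact oJI
      · exact absurd rfl hij
      · exact oJK
      · exact oKx
      · exact oKI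
      · exact oKJ
      · exact absurd rfl hij
    · intro i
      fin_cases i
      · exact hx
      · exact fun e => hx (dI.symm.trans e)
      · exact fun e => hx (dJ.symm.trans e)
      · exact fun e => hx (dK.symm.trans e)
  have hU4 : finrank ℝ U = 4 := by
    rw [hU, finrank_span_eq_card hli]
    simp
  -- every element of U has h u u = c * h x x with c > 0 for u ≠ 0
  have hform : ∀ u ∈ U, ∃ c : ℝ, h u u = c * h x x ∧ (u ≠ 0 → 0 < c) := by
    intro u hu
    rw [hU] at hu
    obtain ⟨c, hc⟩ := (mem_span_range_iff_exists_fun ℝ).mp hu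
    rw [Fin.sum_univ_four] at hc
    simp only [hf, Matrix.cons_val_zero, Matrix.cons_val_one, Matrix.head_cons,
      Matrix.cons_val_two, Matrix.tail_cons, Matrix.cons_val_three] at hc
    refine ⟨c 0 ^ 2 + c 1 ^ 2 + c 2 ^ 2 + c 3 ^ 2, ?_, ?_⟩
    · rw [← hc]
      simp only [map_add, LinearMap.add_apply, map_smul, LinearMap.smul_apply,
        smul_eq_mul, oxI, oxJ, oxK, oIx, oIJ, oIK, oJx, oJI, oJK, oKx, oKI, oKJ,
        dI, dJ, dK]
      ring
    · intro hu0
      rcases eq_or_ne (c 0) 0 with h0 | h0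
      rotate_left
      · positivity
      rcases eq_or_ne (c 1) 0 with h1 | h1
      rotate_left
      · positivity
      rcases eq_or_ne (c 2) 0 with h2 | h2
      rotate_left
      · positivity
      rcases eq_or_ne (c 3) 0 with h3 | h3
      rotate_left
      · positivity
      exfalso
      apply hu0
      rw [← hc, h0, h1, h2, h3]
      simp
  have hUdef : ∀ u ∈ U, u ≠ 0 → h u u ≠ 0 := by
    intro u hu hu0
    obtain ⟨c, hc, hcpos⟩ := hform u hu
    rw [hc]
    exact mul_ne_zero (ne_of_gt (hcpos hu0)) hx
  -- h restricted to U is nondegenerate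
  have hUnd : (h.restrict U).Nondegenerate := by
    refine (LinearMap.IsRefl.nondegenerate_iff_separatingLeft (fun a b hab => by simp only [LinearMap.BilinForm.restrict_apply, LinearMap.domRestrict_apply] at hab ⊢; rw [hsym]; exact hab)).2 ?_
    rintro ⟨u, hu⟩ H
    have hu0 : u = 0 := by
      by_contra hne
      exact hUdef u hu hne (by simpa using H ⟨u, hu⟩)
    exact Subtype.ext hu0
  have hrefl : h.IsRefl := fun a b hab => by rw [hsym]; exact hab
  have hcompl : IsCompl U (h.orthogonal U) :=
    LinearMap.BilinForm.isCompl_orthogonal_of_restrict_nondegenerate (B := h) hrefl hUnd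
  set Wo : Submodule ℝ V := h.orthogonal U with hWo
  have hrankWo : finrank ℝ Wo = finrank ℝ V - 4 := by
    rw [hWo, LinearMap.BilinForm.finrank_orthogonal hnd U, hU4]
  have h4n : 4 ≤ n := by
    have := Submodule.finrank_le U
    omega
  -- U is invariant under I, J, K
  have hUinvI : ∀ u ∈ U, I u ∈ U := by
    intro u hu
    induction hu using Submodule.span_induction with
    | mem z hz =>
      obtain ⟨i, rfl⟩ := hz
      fin_cases i
      · exact mIx
      · show I (I x) ∈ U; rw [appII]; exact neg_mem mx
      · show I (J x) ∈ U; rw [appIJ]; exact mKx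
      · show I (K x) ∈ U; rw [appIK]; exact neg_mem mJx
    | zero => simp
    | add a b _ _ ha hb => rw [map_add]; exact add_mem ha hb
    | smul r a _ ha => rw [map_smul]; exact smul_mem _ _ ha
  have hUinvJ : ∀ u ∈ U, J u ∈ U := by
    intro u hu
    induction hu using Submodule.span_induction with
    | mem z hz =>
      obtain ⟨i, rfl⟩ := hz
      fin_cases i
      · exact mJx
      · show J (I x) ∈ U; rw [appJI]; exact neg_mem mKx
      · show J (J x) ∈ U; rw [appJJ]; exact neg_mem mx
      · show J (K x) ∈ U; rw [appJK]; exact mIx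
    | zero => simp
    | add a b _ _ ha hb => rw [map_add]; exact add_mem ha hb
    | smul r a _ ha => rw [map_smul]; exact smul_mem _ _ ha
  have hUinvK : ∀ u ∈ U, K u ∈ U := by
    intro u hu
    induction hu using Submodule.span_induction with
    | mem z hz =>
      obtain ⟨i, rfl⟩ := hz
      fin_cases i
      · exact mKx
      · show K (I x) ∈ U; rw [appKI]; exact mJx
      · show K (J x) ∈ U; rw [appKJ]; exact neg_mem mIx
      · show K (K x) ∈ U; rw [appKK]; exact neg_mem mx
    | zero => simp
    | add a b _ _ ha hb => rw [map_add]; exact add_mem ha hb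
    | smul r a _ ha => rw [map_smul]; exact smul_mem _ _ ha
  -- the orthogonal complement is invariant under I, J, K
  have hWoinv : ∀ (A : Module.End ℝ V), (∀ y : V, A (A y) = -y) →
      (∀ a b, h (A a) (A b) = h a b) → (∀ u ∈ U, A u ∈ U) →
      ∀ y ∈ Wo, A y ∈ Wo := by
    intro A hAA hhA hAU y hy
    rw [hWo, LinearMap.BilinForm.mem_orthogonal_iff] at hy ⊢
    intro u hu
    have key : A (-(A u)) = u := by rw [map_neg, hAA, neg_neg]
    have : h u (A y) = h (A (-(A u))) (A y) := by rw [key]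
    rw [hhA] at this
    simp only [map_neg, LinearMap.neg_apply] at this
    rw [hy (A u) (hAU u hu)] at this
    simpa [LinearMap.BilinForm.isOrtho_def] using this
  have hWoI : ∀ y ∈ Wo, I y ∈ Wo := hWoinv I appII hhI hUinvI
  have hWoJ : ∀ y ∈ Wo, J y ∈ Wo := hWoinv J appJJ hhJ hUinvJ
  have hWoK : ∀ y ∈ Wo, K y ∈ Wo := hWoinv K appKK hhK hUinvK
  -- restricted structures on Wo
  set h' : BilinForm ℝ Wo := h.restrict Wo with hh'
  have hsym' : ∀ a b : Wo, h' a b = h' b a := by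
    intro a b; simp only [hh', LinearMap.BilinForm.restrict_apply]; exact hsym _ _
  have hnd' : h'.Nondegenerate := by
    refine (LinearMap.IsRefl.nondegenerate_iff_separatingLeft (fun a b hab => by rw [hsym']; exact hab)).2 ?_
    rintro ⟨y, hy⟩ H
    have : y = 0 := by
      apply hnd.1
      intro v
      have hv : v ∈ U ⊔ Wo := by rw [hcompl.sup_eq_top]; trivial
      obtain ⟨u, hu, w, hw, rfl⟩ := Submodule.mem_sup.mp hv
      have e1 : h y u = 0 := by
        rw [hsym]
        exact hy u hu
      have e2 : h y w = 0 := by simpa [hh'] using H ⟨w, hw⟩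
      rw [map_add, e1, e2, add_zero]
    exact Subtype.ext this
  set I' : Module.End ℝ Wo := I.restrict hWoI with hI'def
  set J' : Module.End ℝ Wo := J.restrict hWoJ with hJ'def
  set K' : Module.End ℝ Wo := K.restrict hWoK with hK'def
  have hI' : I' * I' = -1 := by
    refine LinearMap.ext fun y => Subtype.ext ?_
    simp [hI'def, Module.End.mul_apply, LinearMap.restrict_apply, appII]
  have hJ' : J' * J' = -1 := by
    refine LinearMap.ext fun y => Subtype.ext ?_
    simp [hJ'def, Module.End.mul_apply, LinearMap.restrict_apply, appJJ]
  have hK' : K' * K' = -1 := by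
    refine LinearMap.ext fun y => Subtype.ext ?_
    simp [hK'def, Module.End.mul_apply, LinearMap.restrict_apply, appKK]
  have appIJK : ∀ y : V, I (J (K y)) = -y := by
    intro y; have := LinearMap.ext_iff.mp hIJK y
    simpa [Module.End.mul_apply] using this
  have hIJK' : I' * J' * K' = -1 := by
    refine LinearMap.ext fun y => Subtype.ext ?_
    simp [hI'def, hJ'def, hK'def, Module.End.mul_apply, LinearMap.restrict_apply, appIJK]
  have hhI' : ∀ a b : Wo, h' (I' a) (I' b) = h' a b := by
    intro a b
    simp [hh', hI'def, LinearMap.BilinForm.restrict_apply, LinearMap.restrict_apply, hhI]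
  have hhJ' : ∀ a b : Wo, h' (J' a) (J' b) = h' a b := by
    intro a b
    simp [hh', hJ'def, LinearMap.BilinForm.restrict_apply, LinearMap.restrict_apply, hhJ]
  have hhK' : ∀ a b : Wo, h' (K' a) (K' b) = h' a b := by
    intro a b
    simp [hh', hK'def, LinearMap.BilinForm.restrict_apply, LinearMap.restrict_apply, hhK]
  -- induction hypothesis on Wo
  have hlt : finrank ℝ Wo < n := by omega
  obtain ⟨P', N', hP'pos, hN'neg, hsum', hdvdP', hdvdN'⟩ :=
    ih (finrank ℝ Wo) hlt h' hsym' hnd' I' J' K' hI' hJ' hK' hIJK' hhI' hhJ' hhK' rfl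
  set Pm : Submodule ℝ V := P'.map Wo.subtype with hPm
  set Nm : Submodule ℝ V := N'.map Wo.subtype with hNm
  have hPmle : Pm ≤ Wo := Submodule.map_subtype_le Wo P'
  have hNmle : Nm ≤ Wo := Submodule.map_subtype_le Wo N'
  have hPmpos : ∀ v ∈ Pm, v ≠ 0 → 0 < h v v := by
    rintro v ⟨p, hp, rfl⟩ hv0
    have hp0 : p ≠ 0 := fun h0 => hv0 (by simp [h0])
    have := hP'pos p hp hp0
    simpa [hh', LinearMap.BilinForm.restrict_apply] using this
  have hNmneg : ∀ v ∈ Nm, v ≠ 0 → h v v < 0 := by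
    rintro v ⟨p, hp, rfl⟩ hv0
    have hp0 : p ≠ 0 := fun h0 => hv0 (by simp [h0])
    have := hN'neg p hp hp0
    simpa [hh', LinearMap.BilinForm.restrict_apply] using this
  have hrankPm : finrank ℝ Pm = finrank ℝ P' := Submodule.finrank_map_subtype_eq Wo P'
  have hrankNm : finrank ℝ Nm = finrank ℝ N' := Submodule.finrank_map_subtype_eq Wo N'
  -- orthogonality between U and Wo
  have horth : ∀ u ∈ U, ∀ w ∈ Wo, h u w = 0 ∧ h w u = 0 := by
    intro u hu w hw
    have e : h u w = 0 := hw u hu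
    exact ⟨e, by rw [hsym]; exact e⟩
  rcases hx.lt_or_gt with hneg | hpos
  · -- h x x < 0 : U joins the negative part
    have hUneg : ∀ u ∈ U, u ≠ 0 → h u u < 0 := by
      intro u hu hu0
      obtain ⟨c, hc, hcpos⟩ := hform u hu
      rw [hc]
      exact mul_neg_of_pos_of_neg (hcpos hu0) hneg
    refine ⟨Pm, U ⊔ Nm, hPmpos, ?_, ?_, ?_, ?_⟩
    · intro v hv hv0
      obtain ⟨u, hu, p, hp, rfl⟩ := Submodule.mem_sup.mp hv
      obtain ⟨e1, e2⟩ := horth u hu p (hNmle hp)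
      have expand : h (u + p) (u + p) = h u u + h p p := by
        simp only [map_add, LinearMap.add_apply]
        rw [e1, e2]; ring
      rw [expand]
      have hub : h u u ≤ 0 := by
        rcases eq_or_ne u 0 with rfl | hu0
        · simp
        · exact le_of_lt (hUneg u hu hu0)
      have hpb : h p p ≤ 0 := by
        rcases eq_or_ne p 0 with rfl | hp0
        · simp
        · exact le_of_lt (hNmneg p hp hp0)
      rcases eq_or_ne u 0 with rfl | hu0
      · have hp0 : p ≠ 0 := by simpa using hv0
        have := hNmneg p hp hp0
        simpa using this
      · have := hUneg u hu hu0
        linarith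
    · -- rank count
      have hdisj : Disjoint U Nm := hcompl.disjoint.mono_right hNmle
      have := Submodule.finrank_sup_add_finrank_inf_eq U Nm
      rw [hdisj.eq_bot, finrank_bot, add_zero] at this
      omega
    · omega
    · have hdisj : Disjoint U Nm := hcompl.disjoint.mono_right hNmle
      have := Submodule.finrank_sup_add_finrank_inf_eq U Nm
      rw [hdisj.eq_bot, finrank_bot, add_zero] at this
      omega
  · -- 0 < h x x : U joins the positive part
    have hUpos : ∀ u ∈ U, u ≠ 0 → 0 < h u u := by
      intro u hu hu0
      obtain ⟨c, hc, hcpos⟩ := hform u hu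
      rw [hc]
      exact mul_pos (hcpos hu0) hpos
    refine ⟨U ⊔ Pm, Nm, ?_, hNmneg, ?_, ?_, ?_⟩
    · intro v hv hv0
      obtain ⟨u, hu, p, hp, rfl⟩ := Submodule.mem_sup.mp hv
      obtain ⟨e1, e2⟩ := horth u hu p (hPmle hp)
      have expand : h (u + p) (u + p) = h u u + h p p := by
        simp only [map_add, LinearMap.add_apply]
        rw [e1, e2]; ring
      rw [expand]
      have hub : 0 ≤ h u u := by
        rcases eq_or_ne u 0 with rfl | hu0
        · simp
        · exact le_of_lt (hUpos u hu hu0)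
      have hpb : 0 ≤ h p p := by
        rcases eq_or_ne p 0 with rfl | hp0
        · simp
        · exact le_of_lt (hPmpos p hp hp0)
      rcases eq_or_ne u 0 with rfl | hu0
      · have hp0 : p ≠ 0 := by simpa using hv0
        have := hPmpos p hp hp0
        simpa using this
      · have := hUpos u hu hu0
        linarith
    · have hdisj : Disjoint U Pm := hcompl.disjoint.mono_right hPmle
      have := Submodule.finrank_sup_add_finrank_inf_eq U Pm
      rw [hdisj.eq_bot, finrank_bot, add_zero] at this
      omega
    · have hdisj : Disjoint U Pm := hcompl.disjoint.mono_right hPmle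
      have := Submodule.finrank_sup_add_finrank_inf_eq U Pm
      rw [hdisj.eq_bot, finrank_bot, add_zero] at this
      omega
    · omega

set_option maxHeartbeats 1000000 in
theorem hyperMaxPos {V : Type u} [AddCommGroup V] [Module ℝ V] [FiniteDimensional ℝ V]
    (h : BilinForm ℝ V)
    (hsym : ∀ x y, h x y = h y x)
    (hnd : h.Nondegenerate)
    (I J K : Module.End ℝ V)
    (hI : I * I = -1) (hJ : J * J = -1) (hK : K * K = -1)
    (hIJK : I * J * K = -1)
    (hhI : ∀ x y, h (I x) (I y) = h x y)
    (hhJ : ∀ x y, h (J x) (J y) = h x y)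
    (hhK : ∀ x y, h (K x) (K y) = h x y)
    (W : Submodule ℝ V)
    (hWpos : ∀ x ∈ W, x ≠ 0 → 0 < h x x)
    (hWmax : ∀ W' : Submodule ℝ V, (∀ x ∈ W', x ≠ 0 → 0 < h x x) → W ≤ W' → W' = W) :
    4 ∣ finrank ℝ W := by
  have hrefl : h.IsRefl := fun a b hab => by rw [hsym]; exact hab
  -- h restricted to W is nondegenerate
  have hWnd : (h.restrict W).Nondegenerate := by
    refine (LinearMap.IsRefl.nondegenerate_iff_separatingLeft (fun a b hab => by simp only [LinearMap.BilinForm.restrict_apply, LinearMap.domRestrict_apply] at hab ⊢; rw [hsym]; exact hab)).2 ?_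
    rintro ⟨w, hw⟩ H
    refine Subtype.ext ?_
    by_contra hne
    have h1 : h w w = 0 := by simpa using H ⟨w, hw⟩
    exact absurd h1 (ne_of_gt (hWpos w hw hne))
  have hcompl : IsCompl W (h.orthogonal W) :=
    LinearMap.BilinForm.isCompl_orthogonal_of_restrict_nondegenerate (B := h) hrefl hWnd
  set Wo : Submodule ℝ V := h.orthogonal W with hWo
  -- step 1: no positive vectors in the orthogonal complement
  have key1 : ∀ y ∈ Wo, y ≠ 0 → ¬(0 < h y y) := by
    intro y hy hy0 hypos
    have horth : ∀ w ∈ W, h w y = 0 := fun w hw => hy w hw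
    set W' : Submodule ℝ V := W ⊔ Submodule.span ℝ {y} with hW'
    have hW'pos : ∀ v ∈ W', v ≠ 0 → 0 < h v v := by
      intro v hv hv0
      obtain ⟨w, hw, z, hz, rfl⟩ := Submodule.mem_sup.mp hv
      obtain ⟨t, rfl⟩ := Submodule.mem_span_singleton.mp hz
      have e1 : h w (t • y) = 0 := by
        rw [map_smul, smul_eq_mul, horth w hw, mul_zero]
      have e2 : h (t • y) w = 0 := by rw [hsym]; exact e1
      have e3 : h (t • y) (t • y) = t ^ 2 * h y y := by
        simp only [map_smul, LinearMap.smul_apply, smul_eq_mul]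
        ring
      have expand : h (w + t • y) (w + t • y) = h w w + t ^ 2 * h y y := by
        simp only [map_add, LinearMap.add_apply]
        rw [e1, e2, e3]; ring
      rw [expand]
      have hwb : 0 ≤ h w w := by
        rcases eq_or_ne w 0 with rfl | hw0
        · simp
        · exact le_of_lt (hWpos w hw hw0)
      rcases eq_or_ne t 0 with rfl | ht0
      · have hw0 : w ≠ 0 := by simpa using hv0
        have := hWpos w hw hw0
        nlinarith
      · nlinarith [sq_pos_of_ne_zero ht0]
    have hWW' : W' = W := hWmax W' hW'pos le_sup_left
    have hyW : y ∈ W := by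
      rw [← hWW', hW']
      exact Submodule.mem_sup_right (Submodule.mem_span_singleton_self y)
    have : h y y = 0 := horth y hyW
    linarith
  -- step 2: the orthogonal complement is negative definite
  have key2 : ∀ y ∈ Wo, y ≠ 0 → h y y < 0 := by
    intro y hy hy0
    rcases lt_trichotomy (h y y) 0 with hlt | heq | hgt
    · exact hlt
    · exfalso
      -- find z in Wo with h y z ≠ 0
      have hz : ∃ z ∈ Wo, h y z ≠ 0 := by
        by_contra hno
        push_neg at hno
        apply hy0
        apply hnd.1
        intro v
        have hv : v ∈ W ⊔ Wo := by rw [hcompl.sup_eq_top]; trivial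
        obtain ⟨w, hw, z, hzw, rfl⟩ := Submodule.mem_sup.mp hv
        have e1 : h y w = 0 := by rw [hsym]; exact hy w hw
        have e2 : h y z = 0 := hno z hzw
        rw [map_add, e1, e2, add_zero]
      obtain ⟨z, hzWo, hyz⟩ := hz
      set t : ℝ := (1 - h z z) / (2 * h y z) with ht
      set v : V := z + t • y with hv
      have hvWo : v ∈ Wo := Submodule.add_mem _ hzWo (Submodule.smul_mem _ _ hy)
      have hvv : h v v = 1 := by
        have e1 : h z y = h y z := hsym z y
        have expand : h v v = h z z + 2 * t * h y z + t ^ 2 * h y y := by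
          rw [hv]
          simp only [map_add, LinearMap.add_apply, map_smul, LinearMap.smul_apply,
            smul_eq_mul]
          rw [e1]; ring
        rw [expand, heq, ht]
        field_simp
        ring
      have hv0 : v ≠ 0 := by
        intro h0
        rw [h0] at hvv
        simp at hvv
      exact key1 v hvWo hv0 (by rw [hvv]; norm_num)
    · exact absurd hgt (key1 y hy hy0)
  -- decomposition
  obtain ⟨P, N, hPpos, hNneg, hsum, hdvdP, hdvdN⟩ :=
    hyperDecomp (finrank ℝ V) h hsym hnd I J K hI hJ hK hIJK hhI hhJ hhK rfl
  -- disjointness facts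
  have hdisj1 : Disjoint W N := by
    rw [Submodule.disjoint_def]
    intro v hvW hvN
    by_contra hv0
    exact absurd (hWpos v hvW hv0) (not_lt.mpr (le_of_lt (hNneg v hvN hv0)))
  have hdisj2 : Disjoint P Wo := by
    rw [Submodule.disjoint_def]
    intro v hvP hvWo
    by_contra hv0
    exact absurd (hPpos v hvP hv0) (not_lt.mpr (le_of_lt (key2 v hvWo hv0)))
  have hle1 : finrank ℝ W + finrank ℝ N ≤ finrank ℝ V := by
    have e := Submodule.finrank_sup_add_finrank_inf_eq W N
    rw [hdisj1.eq_bot, finrank_bot, add_zero] at e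
    rw [← e]
    exact Submodule.finrank_le _
  have hle2 : finrank ℝ P + finrank ℝ Wo ≤ finrank ℝ V := by
    have e := Submodule.finrank_sup_add_finrank_inf_eq P Wo
    rw [hdisj2.eq_bot, finrank_bot, add_zero] at e
    rw [← e]
    exact Submodule.finrank_le _
  have hWWo : finrank ℝ W + finrank ℝ Wo = finrank ℝ V :=
    Submodule.finrank_add_eq_of_isCompl hcompl
  have : finrank ℝ W = finrank ℝ P := by omega
  omega


/-- The signature of a hypercomplex-Hermitian nondegenerate symmetric form is
of the form `(4p, 4q)`: every maximal positive-definite subspace and every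
maximal negative-definite subspace has dimension divisible by `4`. -/
theorem stmt5 {V : Type*} [AddCommGroup V] [Module ℝ V] [FiniteDimensional ℝ V]
    (h : LinearMap.BilinForm ℝ V)
    (hsym : ∀ x y, h x y = h y x)
    (hnd : h.Nondegenerate)
    (I J K : Module.End ℝ V)
    (hI : I * I = -1) (hJ : J * J = -1) (hK : K * K = -1)
    (hIJK : I * J * K = -1)
    (hhI : ∀ x y, h (I x) (I y) = h x y)
    (hhJ : ∀ x y, h (J x) (J y) = h x y)
    (hhK : ∀ x y, h (K x) (K y) = h x y) :
    (∀ W : Submodule ℝ V,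
      (∀ x ∈ W, x ≠ 0 → 0 < h x x) →
      (∀ W' : Submodule ℝ V, (∀ x ∈ W', x ≠ 0 → 0 < h x x) → W ≤ W' → W' = W) →
      4 ∣ Module.finrank ℝ W) ∧
    (∀ W : Submodule ℝ V,
      (∀ x ∈ W, x ≠ 0 → h x x < 0) →
      (∀ W' : Submodule ℝ V, (∀ x ∈ W', x ≠ 0 → h x x < 0) → W ≤ W' → W' = W) →
      4 ∣ Module.finrank ℝ W) := by
  constructor
  · intro W hWpos hWmax
    exact hyperMaxPos h hsym hnd I J K hI hJ hK hIJK hhI hhJ hhK W hWpos hWmax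
  · intro W hWneg hWmax
    have hsym' : ∀ x y, (-h) x y = (-h) y x := by
      intro x y
      simp only [LinearMap.neg_apply]
      rw [hsym]
    have hnd' : (-h).Nondegenerate := by
      refine (LinearMap.IsRefl.nondegenerate_iff_separatingLeft (fun a b hab => by rw [hsym']; exact hab)).2 ?_
      intro x hx
      apply hnd.1 x
      intro y
      have := hx y
      simp only [LinearMap.neg_apply, neg_eq_zero] at this
      exact this
    have hhI' : ∀ x y, (-h) (I x) (I y) = (-h) x y := by
      intro x y; simp only [LinearMap.neg_apply, neg_inj]; exact hhI x y
    have hhJ' : ∀ x y, (-h) (J x) (J y) = (-h) x y := by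
      intro x y; simp only [LinearMap.neg_apply, neg_inj]; exact hhJ x y
    have hhK' : ∀ x y, (-h) (K x) (K y) = (-h) x y := by
      intro x y; simp only [LinearMap.neg_apply, neg_inj]; exact hhK x y
    apply hyperMaxPos (-h) hsym' hnd' I J K hI hJ hK hIJK hhI' hhJ' hhK' W
    · intro x hx hx0
      have := hWneg x hx hx0
      simp only [LinearMap.neg_apply]
      linarith
    · intro W' hW' hle
      apply hWmax W' _ hle
      intro x hx hx0
      have := hW' x hx hx0
      simp only [LinearMap.neg_apply] at this
      linarith
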